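/- Let (β_k)_{k≥1} be real numbers and (a^{(m)})_{m≥0} a compatible family of 1-forms on the diamond hierarchical graphs, with Dirichlet magnetic operators D_m. Let m ≥ 2 and suppose cos 2β_m ≠ 0. If z ∈ ℂ with z ≠ 1 is an eigenvalue of D_m, then R_m(z) is an eigenvalue of D_{m−1} and the multiplicities agree: dim ker(D_m − z·I) = dim ker(D_{m−1} − R_m(z)·I). -/

import Mathlib

open Complex

abbrev DEdge (m : ℕ) : Type := Fin m → Fin 4

def DVtx : ℕ → Type
  | 0 => Bool
  | m + 1 => DVtx m ⊕ (DEdge m × Bool)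

instance DVtx.instFintype : (m : ℕ) → Fintype (DVtx m)
  | 0 => inferInstanceAs (Fintype Bool)
  | m + 1 =>
      letI := DVtx.instFintype m
      inferInstanceAs (Fintype (DVtx m ⊕ (DEdge m × Bool)))

instance DVtx.instDecidableEq : (m : ℕ) → DecidableEq (DVtx m)
  | 0 => inferInstanceAs (DecidableEq Bool)
  | m + 1 =>
      letI := DVtx.instDecidableEq m
      inferInstanceAs (DecidableEq (DVtx m ⊕ (DEdge m × Bool)))

/-- The inclusion of scale-`m` vertices into scale-`m+1` vertices. -/
def oldV {m : ℕ} (x : DVtx m) : DVtx (m + 1) := Sum.inl x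

/-- The new vertices at scale `m+1`: each scale-`m` edge gives two new vertices. -/
def newV {m : ℕ} (p : DEdge m × Bool) : DVtx (m + 1) := Sum.inr p

/-- Endpoints (source, target) of each canonically directed edge. Each edge `w` of `G_m`
with endpoints `x = src w`, `y = tgt w` is replaced in `G_{m+1}` by the 4-cycle
`x–u–y–v–x` with `u = (w,false)`, `v = (w,true)`, its four edges directed
`x→u`, `u→y`, `y→v`, `v→x`. -/
def dEnds : (m : ℕ) → DEdge m → DVtx m × DVtx m
  | 0, _ => (false, true)
  | m + 1, w =>
      let p : DEdge m := fun i => w i.castSucc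
      let x := (dEnds m p).1
      let y := (dEnds m p).2
      if w (Fin.last m) = 0 then (oldV x, newV (p, false))
      else if w (Fin.last m) = 1 then (newV (p, false), oldV y)
      else if w (Fin.last m) = 2 then (oldV y, newV (p, true))
      else (newV (p, true), oldV x)

def dsrc (m : ℕ) (e : DEdge m) : DVtx m := (dEnds m e).1
def dtgt (m : ℕ) (e : DEdge m) : DVtx m := (dEnds m e).2

/-- Degree of a vertex in `G_m`. -/
def ddeg (m : ℕ) (x : DVtx m) : ℕ :=
  (Finset.univ.filter fun e : DEdge m => dsrc m e = x).card +
  (Finset.univ.filter fun e : DEdge m => dtgt m e = x).card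

/-- The magnetic operator `M^a_m` associated to a 1-form `a` (recorded on the canonical
orientations of the edges; the reversed edge carries `-a e`). -/
noncomputable def magOp (m : ℕ) (a : DEdge m → ℝ) (f : DVtx m → ℂ) (x : DVtx m) : ℂ :=
  (ddeg m x : ℂ)⁻¹ *
    ((∑ e : DEdge m, if dsrc m e = x then f x - Complex.exp (Complex.I * a e) * f (dtgt m e) else 0) +
     (∑ e : DEdge m, if dtgt m e = x then f x - Complex.exp (-(Complex.I * a e)) * f (dsrc m e) else 0))

/-- The two original vertices `V_0` viewed inside `V_m`. -/
def base : (m : ℕ) → Bool → DVtx m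
  | 0, b => b
  | m + 1, b => oldV (base m b)

/-- Matrix of the magnetic operator `M^a_m`. -/
noncomputable def magMat (m : ℕ) (a : DEdge m → ℝ) : Matrix (DVtx m) (DVtx m) ℂ :=
  Matrix.of fun x y => magOp m a (fun v => if v = y then 1 else 0) x

/-- The Dirichlet magnetic operator: submatrix indexed by `V_m \ V_0`. -/
noncomputable def dirMat (m : ℕ) (a : DEdge m → ℝ) :
    Matrix {x : DVtx m // ∀ b, x ≠ base m b} {x : DVtx m // ∀ b, x ≠ base m b} ℂ :=
  (magMat m a).submatrix Subtype.val Subtype.val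

/-- Flux of a 1-form around the scale-`(m+1)` cell replacing edge `w` of `G_m`. -/
noncomputable def cellFlux {m : ℕ} (a : DEdge (m + 1) → ℝ) (w : DEdge m) : ℝ :=
  a (Fin.snoc w 0) + a (Fin.snoc w 1) + a (Fin.snoc w 2) + a (Fin.snoc w 3)

/-- The trace of a 1-form on `G_{m+1}` to `G_m`:
`a'(e_{xy}) = (1/2)(a(e_{xu}) + a(e_{uy}) + a(e_{xv}) + a(e_{vy}))`. -/
noncomputable def traceForm {m : ℕ} (a : DEdge (m + 1) → ℝ) : DEdge m → ℝ :=
  fun w => (1 / 2) * (a (Fin.snoc w 0) + a (Fin.snoc w 1) - a (Fin.snoc w 2) - a (Fin.snoc w 3))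

/-- A compatible family of 1-forms: flux `±4β_m` through every scale-`m` cell, and each
form traces to the previous one. -/
def Compatible (βs : ℕ → ℝ) (a : (m : ℕ) → DEdge m → ℝ) : Prop :=
  ∀ (k : ℕ) (w : DEdge k),
    (cellFlux (a (k + 1)) w = 4 * βs (k + 1) ∨ cellFlux (a (k + 1)) w = -(4 * βs (k + 1))) ∧
    traceForm (a (k + 1)) w = a k w
section Basic
variable {m : ℕ}

def edgeEquiv (m : ℕ) : (DEdge m × Fin 4) ≃ DEdge (m + 1) where
  toFun p := Fin.snoc p.1 p.2
  invFun e := (Fin.init e, e (Fin.last m))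
  left_inv p := by simp [Fin.init_snoc]
  right_inv e := by simp [Fin.snoc_init_self]

lemma sum_edges {M : Type*} [AddCommMonoid M] (G : DEdge (m + 1) → M) :
    ∑ e, G e = ∑ w : DEdge m,
      (G (Fin.snoc w 0) + G (Fin.snoc w 1) + G (Fin.snoc w 2) + G (Fin.snoc w 3)) := by
  rw [← Equiv.sum_comp (edgeEquiv m) G, Fintype.sum_prod_type]
  refine Finset.sum_congr rfl fun w _ => ?_
  rw [Fin.sum_univ_four]
  rfl

lemma dEnds_snoc (w : DEdge m) (j : Fin 4) :
    dEnds (m + 1) (Fin.snoc w j) =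
      if j = 0 then (oldV (dsrc m w), newV (w, false))
      else if j = 1 then (newV (w, false), oldV (dtgt m w))
      else if j = 2 then (oldV (dtgt m w), newV (w, true))
      else (newV (w, true), oldV (dsrc m w)) := by
  show (let p : DEdge m := fun i => (Fin.snoc w j : DEdge (m+1)) i.castSucc; _) = _
  rw [dEnds]
  simp only [Fin.snoc_castSucc, Fin.snoc_last]
  rfl

lemma dsrc_snoc0 (w : DEdge m) : dsrc (m + 1) (Fin.snoc w 0) = oldV (dsrc m w) := by
  rw [dsrc, dEnds_snoc]; rfl
lemma dtgt_snoc0 (w : DEdge m) : dtgt (m + 1) (Fin.snoc w 0) = newV (w, false) := by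
  rw [dtgt, dEnds_snoc]; rfl
lemma dsrc_snoc1 (w : DEdge m) : dsrc (m + 1) (Fin.snoc w 1) = newV (w, false) := by
  rw [dsrc, dEnds_snoc]; rfl
lemma dtgt_snoc1 (w : DEdge m) : dtgt (m + 1) (Fin.snoc w 1) = oldV (dtgt m w) := by
  rw [dtgt, dEnds_snoc]; rfl
lemma dsrc_snoc2 (w : DEdge m) : dsrc (m + 1) (Fin.snoc w 2) = oldV (dtgt m w) := by
  rw [dsrc, dEnds_snoc]; rfl
lemma dtgt_snoc2 (w : DEdge m) : dtgt (m + 1) (Fin.snoc w 2) = newV (w, true) := by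
  rw [dtgt, dEnds_snoc]; rfl
lemma dsrc_snoc3 (w : DEdge m) : dsrc (m + 1) (Fin.snoc w 3) = newV (w, true) := by
  rw [dsrc, dEnds_snoc]; rfl
lemma dtgt_snoc3 (w : DEdge m) : dtgt (m + 1) (Fin.snoc w 3) = oldV (dsrc m w) := by
  rw [dtgt, dEnds_snoc]; rfl

end Basic
section Deg
variable {m : ℕ}

@[simp] lemma oldV_inj {x y : DVtx m} : oldV x = oldV y ↔ x = y := Sum.inl_injective.eq_iff
@[simp] lemma newV_inj {p q : DEdge m × Bool} : newV p = newV q ↔ p = q := Sum.inr_injective.eq_iff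
@[simp] lemma oldV_ne_newV (x : DVtx m) (p) : oldV x ≠ newV p := fun h => Sum.inl_ne_inr h
@[simp] lemma newV_ne_oldV (x : DVtx m) (p) : newV p ≠ oldV x := fun h => Sum.inr_ne_inl h

lemma ddeg_new (w0 : DEdge m) (b : Bool) : ddeg (m + 1) (newV (w0, b)) = 2 := by
  rw [ddeg, Finset.card_filter, Finset.card_filter, sum_edges, sum_edges]
  cases b <;>
    simp [dsrc_snoc0, dsrc_snoc1, dsrc_snoc2, dsrc_snoc3,
      dtgt_snoc0, dtgt_snoc1, dtgt_snoc2, dtgt_snoc3, Prod.ext_iff,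
      Finset.sum_ite_eq']

lemma ddeg_old (x : DVtx m) : ddeg (m + 1) (oldV x) = 2 * ddeg m x := by
  rw [ddeg, ddeg, Finset.card_filter, Finset.card_filter, Finset.card_filter,
    Finset.card_filter, sum_edges, sum_edges]
  simp only [dsrc_snoc0, dsrc_snoc1, dsrc_snoc2, dsrc_snoc3,
    dtgt_snoc0, dtgt_snoc1, dtgt_snoc2, dtgt_snoc3, oldV_inj, newV_ne_oldV,
    if_false, add_zero, zero_add, Finset.sum_add_distrib]
  ring

lemma ddeg_pos : ∀ (m : ℕ) (x : DVtx m), 0 < ddeg m x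
  | 0, x => by revert x; decide
  | m + 1, Sum.inl x => by
      rw [show (Sum.inl x : DVtx (m + 1)) = oldV x from rfl, ddeg_old]
      have := ddeg_pos m x; omega
  | m + 1, Sum.inr p => by
      obtain ⟨w, b⟩ := p
      rw [show (Sum.inr (w, b) : DVtx (m + 1)) = newV (w, b) from rfl, ddeg_new]
      omega

lemma ddeg_ne (m : ℕ) (x : DVtx m) : (ddeg m x : ℂ) ≠ 0 :=
  Nat.cast_ne_zero.mpr (ddeg_pos m x).ne'

end Deg
section MagLin
variable {m : ℕ}

noncomputable def magLM (m : ℕ) (a : DEdge m → ℝ) : (DVtx m → ℂ) →ₗ[ℂ] (DVtx m → ℂ) where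
  toFun f := magOp m a f
  map_add' f g := by
    funext x
    simp only [magOp, Pi.add_apply]
    rw [Finset.sum_congr rfl (fun e _ => show
        (if dsrc m e = x then (f x + g x) - Complex.exp (Complex.I * a e) * (f (dtgt m e) + g (dtgt m e)) else 0)
        = (if dsrc m e = x then f x - Complex.exp (Complex.I * a e) * f (dtgt m e) else 0)
        + (if dsrc m e = x then g x - Complex.exp (Complex.I * a e) * g (dtgt m e) else 0) by split <;> ring),
      Finset.sum_congr rfl (fun e _ => show
        (if dtgt m e = x then (f x + g x) - Complex.exp (-(Complex.I * a e)) * (f (dsrc m e) + g (dsrc m e)) else 0)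
        = (if dtgt m e = x then f x - Complex.exp (-(Complex.I * a e)) * f (dsrc m e) else 0)
        + (if dtgt m e = x then g x - Complex.exp (-(Complex.I * a e)) * g (dsrc m e) else 0) by split <;> ring),
      Finset.sum_add_distrib, Finset.sum_add_distrib]
    ring
  map_smul' c f := by
    funext x
    simp only [magOp, Pi.smul_apply, smul_eq_mul, RingHom.id_apply]
    rw [Finset.sum_congr rfl (fun e _ => show
        (if dsrc m e = x then (c * f x) - Complex.exp (Complex.I * a e) * (c * f (dtgt m e)) else 0)
        = c * (if dsrc m e = x then f x - Complex.exp (Complex.I * a e) * f (dtgt m e) else 0) by split <;> ring),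
      Finset.sum_congr rfl (fun e _ => show
        (if dtgt m e = x then (c * f x) - Complex.exp (-(Complex.I * a e)) * (c * f (dsrc m e)) else 0)
        = c * (if dtgt m e = x then f x - Complex.exp (-(Complex.I * a e)) * f (dsrc m e) else 0) by split <;> ring),
      ← Finset.mul_sum, ← Finset.mul_sum]
    ring

lemma magLM_apply (a : DEdge m → ℝ) (f : DVtx m → ℂ) (x : DVtx m) :
    magLM m a f x = magOp m a f x := rfl

/-- Extension by zero of a function on non-base vertices. -/
noncomputable def ExtZ (m : ℕ) (f : {x : DVtx m // ∀ b, x ≠ base m b} → ℂ) : DVtx m → ℂ :=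
  fun v => if h : ∀ b, v ≠ base m b then f ⟨v, h⟩ else 0

lemma ExtZ_val (f : {x : DVtx m // ∀ b, x ≠ base m b} → ℂ) (x : {x : DVtx m // ∀ b, x ≠ base m b}) :
    ExtZ m f x.val = f x := by
  rw [ExtZ, dif_pos x.2]

lemma ExtZ_base (f : {x : DVtx m // ∀ b, x ≠ base m b} → ℂ) (b : Bool) :
    ExtZ m f (base m b) = 0 := by
  rw [ExtZ, dif_neg]
  intro h
  exact h b rfl

lemma mulVec_dirMat (a : DEdge m → ℝ) (f : {x : DVtx m // ∀ b, x ≠ base m b} → ℂ)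
    (x : {x : DVtx m // ∀ b, x ≠ base m b}) :
    (dirMat m a).mulVec f x = magOp m a (ExtZ m f) x.val := by
  have hExt : ExtZ m f = ∑ y : {x : DVtx m // ∀ b, x ≠ base m b},
      f y • (fun v => if v = y.val then (1 : ℂ) else 0) := by
    funext v
    rw [Finset.sum_apply]
    by_cases h : ∀ b, v ≠ base m b
    · rw [ExtZ, dif_pos h,
        Finset.sum_congr rfl (fun y _ => show (f y • fun v => if v = y.val then (1:ℂ) else 0) v
          = if y = ⟨v, h⟩ then f y else 0 by
            simp only [Pi.smul_apply, smul_eq_mul]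
            by_cases hv : v = y.val
            · rw [if_pos hv, if_pos (Subtype.ext hv.symm), mul_one]
            · rw [if_neg hv, if_neg (fun hy => hv (by rw [hy])), mul_zero]),
        Finset.sum_ite_eq' Finset.univ (⟨v, h⟩ : {x : DVtx m // ∀ b, x ≠ base m b}) f,
        if_pos (Finset.mem_univ _)]
    · push_neg at h
      obtain ⟨b, hb⟩ := h
      rw [ExtZ, dif_neg (by push_neg; exact ⟨b, hb⟩)]
      refine (Finset.sum_eq_zero fun y _ => ?_).symm
      simp only [Pi.smul_apply, smul_eq_mul]
      rw [if_neg (fun hv => y.2 b (by rw [← hv, hb])), mul_zero]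
  calc (dirMat m a).mulVec f x
      = ∑ y, f y • magLM m a (fun v => if v = y.val then (1:ℂ) else 0) x.val := by
        rw [Matrix.mulVec]
        refine Finset.sum_congr rfl fun y _ => ?_
        simp only [dirMat, Matrix.submatrix_apply, magMat, Matrix.of_apply, smul_eq_mul]
        rw [magLM_apply, mul_comm]
    _ = magLM m a (ExtZ m f) x.val := by
        rw [hExt, map_sum]
        rw [Finset.sum_apply]
        refine Finset.sum_congr rfl fun y _ => ?_
        rw [map_smul]
        rfl
    _ = magOp m a (ExtZ m f) x.val := rfl

lemma mem_ker_iff (a : DEdge m → ℝ) (μ : ℂ) (f : {x : DVtx m // ∀ b, x ≠ base m b} → ℂ) :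
    f ∈ LinearMap.ker (Matrix.toLin' (dirMat m a - μ • 1)) ↔
      ∀ x, magOp m a (ExtZ m f) x.val = μ * f x := by
  rw [LinearMap.mem_ker, Matrix.toLin'_apply, funext_iff]
  refine forall_congr' fun x => ?_
  rw [show ((dirMat m a - μ • 1).mulVec f) x = (dirMat m a).mulVec f x - μ * f x by
    simp [Matrix.sub_mulVec, Matrix.smul_mulVec, Matrix.one_mulVec], Pi.zero_apply,
    sub_eq_zero, mulVec_dirMat]

end MagLin
section ExpAlg

lemma expI_mul (r s : ℝ) : Complex.exp (Complex.I * (r : ℂ)) * Complex.exp (Complex.I * (s : ℂ))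
    = Complex.exp (Complex.I * ((r + s : ℝ) : ℂ)) := by
  rw [← Complex.exp_add]; congr 1; push_cast; ring

lemma expI_negmul (r s : ℝ) :
    Complex.exp (-(Complex.I * (r : ℂ))) * Complex.exp (-(Complex.I * (s : ℂ)))
    = Complex.exp (-(Complex.I * ((r + s : ℝ) : ℂ))) := by
  rw [← Complex.exp_add]; congr 1; push_cast; ring

lemma expI_cancel (r : ℝ) :
    Complex.exp (Complex.I * (r : ℂ)) * Complex.exp (-(Complex.I * (r : ℂ))) = 1 := by
  rw [← Complex.exp_add]; simp

lemma expPair (p q : ℝ) :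
    Complex.exp (Complex.I * ((p + q : ℝ) : ℂ)) + Complex.exp (-(Complex.I * ((q - p : ℝ) : ℂ)))
      = 2 * ((Real.cos q : ℝ) : ℂ) * Complex.exp (Complex.I * (p : ℂ)) := by
  have hcos : 2 * ((Real.cos q : ℝ) : ℂ)
      = Complex.exp ((q : ℂ) * Complex.I) + Complex.exp (-(q : ℂ) * Complex.I) := by
    rw [Complex.ofReal_cos]; exact Complex.two_cos _
  have e1 : Complex.I * ((p + q : ℝ) : ℂ) = Complex.I * (p : ℂ) + (q : ℂ) * Complex.I := by
    push_cast; ring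
  have e2 : -(Complex.I * ((q - p : ℝ) : ℂ)) = Complex.I * (p : ℂ) + (-(q : ℂ)) * Complex.I := by
    push_cast; ring
  rw [e1, e2, Complex.exp_add, Complex.exp_add, hcos]
  ring

lemma expPair' (p q : ℝ) :
    Complex.exp (-(Complex.I * ((p + q : ℝ) : ℂ))) + Complex.exp (Complex.I * ((q - p : ℝ) : ℂ))
      = 2 * ((Real.cos q : ℝ) : ℂ) * Complex.exp (-(Complex.I * (p : ℂ))) := by
  have := expPair (-p) (-q)
  rw [show (-p) + (-q) = -(p+q) by ring, show (-q) - (-p) = -(q-p) by ring, Real.cos_neg] at this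
  rw [show Complex.I * ((-(p+q) : ℝ) : ℂ) = -(Complex.I * ((p+q : ℝ) : ℂ)) by push_cast; ring,
    show -(Complex.I * ((-(q-p) : ℝ) : ℂ)) = Complex.I * ((q-p : ℝ) : ℂ) by push_cast; ring,
    show Complex.I * ((-p : ℝ) : ℂ) = -(Complex.I * (p : ℂ)) by push_cast; ring] at this
  exact this

lemma cellX (α0 α1 α2 α3 p β : ℝ) (hp : α0 + α1 - α2 - α3 = 2 * p)
    (hf : α0 + α1 + α2 + α3 = 4 * β ∨ α0 + α1 + α2 + α3 = -(4 * β)) (z X Y : ℂ) :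
    2 * X
      - Complex.exp (Complex.I * (α0 : ℂ)) *
        ((2 * (1 - z))⁻¹ * (Complex.exp (-(Complex.I * (α0 : ℂ))) * X
          + Complex.exp (Complex.I * (α1 : ℂ)) * Y))
      - Complex.exp (-(Complex.I * (α3 : ℂ))) *
        ((2 * (1 - z))⁻¹ * (Complex.exp (-(Complex.I * (α2 : ℂ))) * Y
          + Complex.exp (Complex.I * (α3 : ℂ)) * X))
    = (2 - 2 * (2 * (1 - z))⁻¹ - 2 * ((Real.cos (2 * β) : ℝ) : ℂ) * (2 * (1 - z))⁻¹) * X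
      + 2 * ((Real.cos (2 * β) : ℝ) : ℂ) * (2 * (1 - z))⁻¹
        * (X - Complex.exp (Complex.I * (p : ℂ)) * Y) := by
  have h1 := expI_cancel α0
  have h2 := expI_mul α0 α1
  have h3 := expI_negmul α3 α2
  have h4 : Complex.exp (-(Complex.I * (α3:ℂ))) * Complex.exp (Complex.I * (α3:ℂ)) = 1 := by
    rw [mul_comm]; exact expI_cancel α3
  have h5 : Complex.exp (Complex.I * ((α0 + α1 : ℝ) : ℂ))
      + Complex.exp (-(Complex.I * ((α3 + α2 : ℝ) : ℂ)))
      = 2 * ((Real.cos (2*β) : ℝ) : ℂ) * Complex.exp (Complex.I * (p : ℂ)) := by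
    rcases hf with hf | hf
    · have := expPair p (2*β)
      rw [show p + 2*β = α0 + α1 by linarith, show 2*β - p = α3 + α2 by linarith] at this
      exact this
    · have := expPair p (-(2*β))
      rw [show p + -(2*β) = α0 + α1 by linarith, show -(2*β) - p = α3 + α2 by linarith,
        Real.cos_neg] at this
      exact this
  set T := (2 * (1 - z))⁻¹
  linear_combination (-(T * X)) * h1 + (-(T * Y)) * h2 + (-(T * Y)) * h3 + (-(T * X)) * h4
    + (-(T * Y)) * h5

lemma cellY (α0 α1 α2 α3 p β : ℝ) (hp : α0 + α1 - α2 - α3 = 2 * p)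
    (hf : α0 + α1 + α2 + α3 = 4 * β ∨ α0 + α1 + α2 + α3 = -(4 * β)) (z X Y : ℂ) :
    2 * Y
      - Complex.exp (-(Complex.I * (α1 : ℂ))) *
        ((2 * (1 - z))⁻¹ * (Complex.exp (-(Complex.I * (α0 : ℂ))) * X
          + Complex.exp (Complex.I * (α1 : ℂ)) * Y))
      - Complex.exp (Complex.I * (α2 : ℂ)) *
        ((2 * (1 - z))⁻¹ * (Complex.exp (-(Complex.I * (α2 : ℂ))) * Y
          + Complex.exp (Complex.I * (α3 : ℂ)) * X))
    = (2 - 2 * (2 * (1 - z))⁻¹ - 2 * ((Real.cos (2 * β) : ℝ) : ℂ) * (2 * (1 - z))⁻¹) * Y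
      + 2 * ((Real.cos (2 * β) : ℝ) : ℂ) * (2 * (1 - z))⁻¹
        * (Y - Complex.exp (-(Complex.I * (p : ℂ))) * X) := by
  have h1 : Complex.exp (-(Complex.I * (α1:ℂ))) * Complex.exp (Complex.I * (α1:ℂ)) = 1 := by
    rw [mul_comm]; exact expI_cancel α1
  have h2 := expI_negmul α1 α0
  have h3 := expI_mul α2 α3
  have h4 := expI_cancel α2
  have h5 : Complex.exp (-(Complex.I * ((α1 + α0 : ℝ) : ℂ)))
      + Complex.exp (Complex.I * ((α2 + α3 : ℝ) : ℂ))
      = 2 * ((Real.cos (2*β) : ℝ) : ℂ) * Complex.exp (-(Complex.I * (p : ℂ))) := by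
    rcases hf with hf | hf
    · have := expPair' p (2*β)
      rw [show p + 2*β = α1 + α0 by linarith, show 2*β - p = α2 + α3 by linarith] at this
      exact this
    · have := expPair' p (-(2*β))
      rw [show p + -(2*β) = α1 + α0 by linarith, show -(2*β) - p = α2 + α3 by linarith,
        Real.cos_neg] at this
      exact this
  set T := (2 * (1 - z))⁻¹
  linear_combination (-(T * Y)) * h1 + (-(T * X)) * h2 + (-(T * X)) * h3 + (-(T * Y)) * h4
    + (-(T * X)) * h5

lemma scalarNew (u A B z : ℂ) (hz : (1 : ℂ) - z ≠ 0) :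
    (2 : ℂ)⁻¹ * ((u - A) + (u - B)) = z * u ↔ u = (2 * (1 - z))⁻¹ * (A + B) := by
  have h2 : (2 : ℂ) * (1 - z) ≠ 0 := mul_ne_zero two_ne_zero hz
  rw [inv_mul_eq_iff_eq_mul₀ (two_ne_zero : (2:ℂ) ≠ 0), eq_inv_mul_iff_mul_eq₀ h2]
  constructor <;> intro h <;> linear_combination h

lemma scalarOld (c z gx M : ℂ) (hc : c ≠ 0) (hz : (1 : ℂ) - z ≠ 0) :
    (2:ℂ)⁻¹ * ((2 - 2 * (2 * (1 - z))⁻¹ - 2 * c * (2 * (1 - z))⁻¹) * gx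
        + 2 * c * (2 * (1 - z))⁻¹ * M) = z * gx
      ↔ M = ((-2 * z ^ 2 + 4 * z - 1 + c) / c) * gx := by
  have h2 : (2 : ℂ) * (1 - z) ≠ 0 := mul_ne_zero two_ne_zero hz
  rw [div_mul_eq_mul_div, eq_div_iff hc]
  constructor <;> intro h
  · field_simp at h
    linear_combination h
  · field_simp
    linear_combination h

end ExpAlg
section MagComp
variable {m : ℕ}

lemma magOp_new_false (a : DEdge (m+1) → ℝ) (G : DVtx (m+1) → ℂ) (w : DEdge m) :
    magOp (m+1) a G (newV (w, false)) = (2:ℂ)⁻¹ *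
      ((G (newV (w, false)) - Complex.exp (Complex.I * a (Fin.snoc w 1)) * G (oldV (dtgt m w)))
        + (G (newV (w, false)) - Complex.exp (-(Complex.I * a (Fin.snoc w 0))) * G (oldV (dsrc m w)))) := by
  rw [magOp, ddeg_new, sum_edges, sum_edges]
  norm_num
  rw [Finset.sum_congr rfl (fun w' (_ : w' ∈ Finset.univ) => show
      ((if dsrc (m+1) (Fin.snoc w' 0) = newV (w, false) then G (newV (w, false)) - Complex.exp (Complex.I * a (Fin.snoc w' 0)) * G (dtgt (m+1) (Fin.snoc w' 0)) else 0)
      + (if dsrc (m+1) (Fin.snoc w' 1) = newV (w, false) then G (newV (w, false)) - Complex.exp (Complex.I * a (Fin.snoc w' 1)) * G (dtgt (m+1) (Fin.snoc w' 1)) else 0)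
      + (if dsrc (m+1) (Fin.snoc w' 2) = newV (w, false) then G (newV (w, false)) - Complex.exp (Complex.I * a (Fin.snoc w' 2)) * G (dtgt (m+1) (Fin.snoc w' 2)) else 0)
      + (if dsrc (m+1) (Fin.snoc w' 3) = newV (w, false) then G (newV (w, false)) - Complex.exp (Complex.I * a (Fin.snoc w' 3)) * G (dtgt (m+1) (Fin.snoc w' 3)) else 0))
      = (if w' = w then G (newV (w, false)) - Complex.exp (Complex.I * a (Fin.snoc w' 1)) * G (oldV (dtgt m w')) else 0) by
        rw [dsrc_snoc0, dsrc_snoc1, dsrc_snoc2, dsrc_snoc3, dtgt_snoc1,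
          if_neg (oldV_ne_newV _ _), if_neg (oldV_ne_newV _ _),
          if_neg (by simp : ¬ (newV (w', true) = newV (w, false)))]
        simp only [newV_inj, Prod.mk.injEq, and_true]
        ring),
    Finset.sum_congr rfl (fun w' (_ : w' ∈ Finset.univ) => show
      ((if dtgt (m+1) (Fin.snoc w' 0) = newV (w, false) then G (newV (w, false)) - Complex.exp (-(Complex.I * a (Fin.snoc w' 0))) * G (dsrc (m+1) (Fin.snoc w' 0)) else 0)
      + (if dtgt (m+1) (Fin.snoc w' 1) = newV (w, false) then G (newV (w, false)) - Complex.exp (-(Complex.I * a (Fin.snoc w' 1))) * G (dsrc (m+1) (Fin.snoc w' 1)) else 0)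
      + (if dtgt (m+1) (Fin.snoc w' 2) = newV (w, false) then G (newV (w, false)) - Complex.exp (-(Complex.I * a (Fin.snoc w' 2))) * G (dsrc (m+1) (Fin.snoc w' 2)) else 0)
      + (if dtgt (m+1) (Fin.snoc w' 3) = newV (w, false) then G (newV (w, false)) - Complex.exp (-(Complex.I * a (Fin.snoc w' 3))) * G (dsrc (m+1) (Fin.snoc w' 3)) else 0))
      = (if w' = w then G (newV (w, false)) - Complex.exp (-(Complex.I * a (Fin.snoc w' 0))) * G (oldV (dsrc m w')) else 0) by
        rw [dtgt_snoc0, dtgt_snoc1, dtgt_snoc2, dtgt_snoc3, dsrc_snoc0,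
          if_neg (oldV_ne_newV _ _), if_neg (oldV_ne_newV _ _),
          if_neg (by simp : ¬ (newV (w', true) = newV (w, false)))]
        simp only [newV_inj, Prod.mk.injEq, and_true]
        ring),
    Finset.sum_ite_eq' Finset.univ w, Finset.sum_ite_eq' Finset.univ w,
    if_pos (Finset.mem_univ w), if_pos (Finset.mem_univ w)]

lemma magOp_new_true (a : DEdge (m+1) → ℝ) (G : DVtx (m+1) → ℂ) (w : DEdge m) :
    magOp (m+1) a G (newV (w, true)) = (2:ℂ)⁻¹ *
      ((G (newV (w, true)) - Complex.exp (Complex.I * a (Fin.snoc w 3)) * G (oldV (dsrc m w)))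
        + (G (newV (w, true)) - Complex.exp (-(Complex.I * a (Fin.snoc w 2))) * G (oldV (dtgt m w)))) := by
  rw [magOp, ddeg_new, sum_edges, sum_edges]
  norm_num
  rw [Finset.sum_congr rfl (fun w' (_ : w' ∈ Finset.univ) => show
      ((if dsrc (m+1) (Fin.snoc w' 0) = newV (w, true) then G (newV (w, true)) - Complex.exp (Complex.I * a (Fin.snoc w' 0)) * G (dtgt (m+1) (Fin.snoc w' 0)) else 0)
      + (if dsrc (m+1) (Fin.snoc w' 1) = newV (w, true) then G (newV (w, true)) - Complex.exp (Complex.I * a (Fin.snoc w' 1)) * G (dtgt (m+1) (Fin.snoc w' 1)) else 0)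
      + (if dsrc (m+1) (Fin.snoc w' 2) = newV (w, true) then G (newV (w, true)) - Complex.exp (Complex.I * a (Fin.snoc w' 2)) * G (dtgt (m+1) (Fin.snoc w' 2)) else 0)
      + (if dsrc (m+1) (Fin.snoc w' 3) = newV (w, true) then G (newV (w, true)) - Complex.exp (Complex.I * a (Fin.snoc w' 3)) * G (dtgt (m+1) (Fin.snoc w' 3)) else 0))
      = (if w' = w then G (newV (w, true)) - Complex.exp (Complex.I * a (Fin.snoc w' 3)) * G (oldV (dsrc m w')) else 0) by
        rw [dsrc_snoc0, dsrc_snoc1, dsrc_snoc2, dsrc_snoc3, dtgt_snoc3,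
          if_neg (oldV_ne_newV _ _), if_neg (oldV_ne_newV _ _),
          if_neg (by simp : ¬ (newV (w', false) = newV (w, true)))]
        simp only [newV_inj, Prod.mk.injEq, and_true]
        ring),
    Finset.sum_congr rfl (fun w' (_ : w' ∈ Finset.univ) => show
      ((if dtgt (m+1) (Fin.snoc w' 0) = newV (w, true) then G (newV (w, true)) - Complex.exp (-(Complex.I * a (Fin.snoc w' 0))) * G (dsrc (m+1) (Fin.snoc w' 0)) else 0)
      + (if dtgt (m+1) (Fin.snoc w' 1) = newV (w, true) then G (newV (w, true)) - Complex.exp (-(Complex.I * a (Fin.snoc w' 1))) * G (dsrc (m+1) (Fin.snoc w' 1)) else 0)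
      + (if dtgt (m+1) (Fin.snoc w' 2) = newV (w, true) then G (newV (w, true)) - Complex.exp (-(Complex.I * a (Fin.snoc w' 2))) * G (dsrc (m+1) (Fin.snoc w' 2)) else 0)
      + (if dtgt (m+1) (Fin.snoc w' 3) = newV (w, true) then G (newV (w, true)) - Complex.exp (-(Complex.I * a (Fin.snoc w' 3))) * G (dsrc (m+1) (Fin.snoc w' 3)) else 0))
      = (if w' = w then G (newV (w, true)) - Complex.exp (-(Complex.I * a (Fin.snoc w' 2))) * G (oldV (dtgt m w')) else 0) by
        rw [dtgt_snoc0, dtgt_snoc1, dtgt_snoc2, dtgt_snoc3, dsrc_snoc2,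
          if_neg (oldV_ne_newV _ _), if_neg (oldV_ne_newV _ _),
          if_neg (by simp : ¬ (newV (w', false) = newV (w, true)))]
        simp only [newV_inj, Prod.mk.injEq, and_true]
        ring),
    Finset.sum_ite_eq' Finset.univ w, Finset.sum_ite_eq' Finset.univ w,
    if_pos (Finset.mem_univ w), if_pos (Finset.mem_univ w)]

lemma magOp_old (a : DEdge (m+1) → ℝ) (G : DVtx (m+1) → ℂ) (x : DVtx m) :
    magOp (m+1) a G (oldV x) = (2 * (ddeg m x : ℂ))⁻¹ *
      (∑ w : DEdge m,
        ((if dsrc m w = x then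
            2 * G (oldV x) - Complex.exp (Complex.I * a (Fin.snoc w 0)) * G (newV (w, false))
              - Complex.exp (-(Complex.I * a (Fin.snoc w 3))) * G (newV (w, true)) else 0)
          + (if dtgt m w = x then
            2 * G (oldV x) - Complex.exp (-(Complex.I * a (Fin.snoc w 1))) * G (newV (w, false))
              - Complex.exp (Complex.I * a (Fin.snoc w 2)) * G (newV (w, true)) else 0))) := by
  rw [magOp, ddeg_old, sum_edges, sum_edges, ← Finset.sum_add_distrib]
  rw [Finset.sum_congr rfl (fun w (_ : w ∈ Finset.univ) => show
      ((if dsrc (m+1) (Fin.snoc w 0) = oldV x then G (oldV x) - Complex.exp (Complex.I * a (Fin.snoc w 0)) * G (dtgt (m+1) (Fin.snoc w 0)) else 0)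
      + (if dsrc (m+1) (Fin.snoc w 1) = oldV x then G (oldV x) - Complex.exp (Complex.I * a (Fin.snoc w 1)) * G (dtgt (m+1) (Fin.snoc w 1)) else 0)
      + (if dsrc (m+1) (Fin.snoc w 2) = oldV x then G (oldV x) - Complex.exp (Complex.I * a (Fin.snoc w 2)) * G (dtgt (m+1) (Fin.snoc w 2)) else 0)
      + (if dsrc (m+1) (Fin.snoc w 3) = oldV x then G (oldV x) - Complex.exp (Complex.I * a (Fin.snoc w 3)) * G (dtgt (m+1) (Fin.snoc w 3)) else 0))
      + ((if dtgt (m+1) (Fin.snoc w 0) = oldV x then G (oldV x) - Complex.exp (-(Complex.I * a (Fin.snoc w 0))) * G (dsrc (m+1) (Fin.snoc w 0)) else 0)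
      + (if dtgt (m+1) (Fin.snoc w 1) = oldV x then G (oldV x) - Complex.exp (-(Complex.I * a (Fin.snoc w 1))) * G (dsrc (m+1) (Fin.snoc w 1)) else 0)
      + (if dtgt (m+1) (Fin.snoc w 2) = oldV x then G (oldV x) - Complex.exp (-(Complex.I * a (Fin.snoc w 2))) * G (dsrc (m+1) (Fin.snoc w 2)) else 0)
      + (if dtgt (m+1) (Fin.snoc w 3) = oldV x then G (oldV x) - Complex.exp (-(Complex.I * a (Fin.snoc w 3))) * G (dsrc (m+1) (Fin.snoc w 3)) else 0))
      = ((if dsrc m w = x then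
            2 * G (oldV x) - Complex.exp (Complex.I * a (Fin.snoc w 0)) * G (newV (w, false))
              - Complex.exp (-(Complex.I * a (Fin.snoc w 3))) * G (newV (w, true)) else 0)
          + (if dtgt m w = x then
            2 * G (oldV x) - Complex.exp (-(Complex.I * a (Fin.snoc w 1))) * G (newV (w, false))
              - Complex.exp (Complex.I * a (Fin.snoc w 2)) * G (newV (w, true)) else 0)) by
        rw [dsrc_snoc0, dsrc_snoc1, dsrc_snoc2, dsrc_snoc3,
          dtgt_snoc0, dtgt_snoc1, dtgt_snoc2, dtgt_snoc3]
        rw [if_neg (newV_ne_oldV _ _), if_neg (newV_ne_oldV _ _),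
          if_neg (newV_ne_oldV _ _), if_neg (newV_ne_oldV _ _)]
        simp only [oldV_inj]
        split_ifs <;> ring)]
  rw [Nat.cast_mul, Nat.cast_ofNat]

end MagComp
section Decim
variable {m : ℕ}

/-- Value at the new vertices determined by decimation. -/
noncomputable def newval (a : DEdge (m+1) → ℝ) (z : ℂ) (g : DVtx m → ℂ) (w : DEdge m) :
    Bool → ℂ
  | false => (2*(1-z))⁻¹ * (Complex.exp (-(Complex.I * a (Fin.snoc w 0))) * g (dsrc m w)
      + Complex.exp (Complex.I * a (Fin.snoc w 1)) * g (dtgt m w))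
  | true => (2*(1-z))⁻¹ * (Complex.exp (-(Complex.I * a (Fin.snoc w 2))) * g (dtgt m w)
      + Complex.exp (Complex.I * a (Fin.snoc w 3)) * g (dsrc m w))

lemma new_iff (a : DEdge (m+1) → ℝ) (z : ℂ) (hz : (1:ℂ) - z ≠ 0)
    (G : DVtx (m+1) → ℂ) (w : DEdge m) (b : Bool) :
    magOp (m+1) a G (newV (w,b)) = z * G (newV (w,b)) ↔
      G (newV (w,b)) = newval a z (fun v => G (oldV v)) w b := by
  cases b
  · rw [magOp_new_false, scalarNew _ _ _ _ hz]
    simp only [newval]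
    exact ⟨fun h => h.trans (by ring), fun h => h.trans (by ring)⟩
  · rw [magOp_new_true, scalarNew _ _ _ _ hz]
    simp only [newval]
    exact ⟨fun h => h.trans (by ring), fun h => h.trans (by ring)⟩

lemma old_iff (a : DEdge (m+1) → ℝ) (a' : DEdge m → ℝ) (β : ℝ) (z : ℂ)
    (hz : (1:ℂ) - z ≠ 0) (hc : Real.cos (2*β) ≠ 0)
    (htr : ∀ w, traceForm a w = a' w)
    (hflux : ∀ w, cellFlux a w = 4*β ∨ cellFlux a w = -(4*β))
    (G : DVtx (m+1) → ℂ)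
    (hnew : ∀ w b, G (newV (w,b)) = newval a z (fun v => G (oldV v)) w b)
    (x : DVtx m) :
    magOp (m+1) a G (oldV x) = z * G (oldV x) ↔
      magOp m a' (fun v => G (oldV v)) x
        = ((-2*z^2 + 4*z - 1 + ((Real.cos (2*β) : ℝ) : ℂ)) / ((Real.cos (2*β) : ℝ) : ℂ))
            * G (oldV x) := by
  have hcne : ((Real.cos (2*β) : ℝ) : ℂ) ≠ 0 := Complex.ofReal_ne_zero.mpr hc
  have hper : ∀ w : DEdge m,
      ((if dsrc m w = x then
          2 * G (oldV x) - Complex.exp (Complex.I * a (Fin.snoc w 0)) * G (newV (w, false))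
            - Complex.exp (-(Complex.I * a (Fin.snoc w 3))) * G (newV (w, true)) else 0)
        + (if dtgt m w = x then
          2 * G (oldV x) - Complex.exp (-(Complex.I * a (Fin.snoc w 1))) * G (newV (w, false))
            - Complex.exp (Complex.I * a (Fin.snoc w 2)) * G (newV (w, true)) else 0))
      = (2 - 2*(2*(1-z))⁻¹ - 2*((Real.cos (2*β) : ℝ) : ℂ)*(2*(1-z))⁻¹)
          * ((if dsrc m w = x then G (oldV x) else 0) + (if dtgt m w = x then G (oldV x) else 0))
        + 2*((Real.cos (2*β) : ℝ) : ℂ)*(2*(1-z))⁻¹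
          * ((if dsrc m w = x then
                G (oldV x) - Complex.exp (Complex.I * (a' w : ℂ)) * G (oldV (dtgt m w)) else 0)
            + (if dtgt m w = x then
                G (oldV x) - Complex.exp (-(Complex.I * (a' w : ℂ))) * G (oldV (dsrc m w)) else 0)) := by
    intro w
    have hp : a (Fin.snoc w 0) + a (Fin.snoc w 1) - a (Fin.snoc w 2) - a (Fin.snoc w 3)
        = 2 * a' w := by
      have h := htr w; rw [traceForm] at h; linarith
    have hf : a (Fin.snoc w 0) + a (Fin.snoc w 1) + a (Fin.snoc w 2) + a (Fin.snoc w 3) = 4*β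
        ∨ a (Fin.snoc w 0) + a (Fin.snoc w 1) + a (Fin.snoc w 2) + a (Fin.snoc w 3) = -(4*β) := by
      have h := hflux w; rw [cellFlux] at h; exact h
    rw [hnew w false, hnew w true]
    simp only [newval]
    split_ifs with h1 h2 h2
    · rw [h1, h2]
      linear_combination
        (cellX (a (Fin.snoc w 0)) (a (Fin.snoc w 1)) (a (Fin.snoc w 2)) (a (Fin.snoc w 3))
          (a' w) β hp hf z (G (oldV x)) (G (oldV x)))
        + (cellY (a (Fin.snoc w 0)) (a (Fin.snoc w 1)) (a (Fin.snoc w 2)) (a (Fin.snoc w 3))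
          (a' w) β hp hf z (G (oldV x)) (G (oldV x)))
    · rw [h1]
      linear_combination
        (cellX (a (Fin.snoc w 0)) (a (Fin.snoc w 1)) (a (Fin.snoc w 2)) (a (Fin.snoc w 3))
          (a' w) β hp hf z (G (oldV x)) (G (oldV (dtgt m w))))
    · rw [h2]
      linear_combination
        (cellY (a (Fin.snoc w 0)) (a (Fin.snoc w 1)) (a (Fin.snoc w 2)) (a (Fin.snoc w 3))
          (a' w) β hp hf z (G (oldV (dsrc m w))) (G (oldV x)))
    · ring
  rw [magOp_old, Finset.sum_congr rfl (fun w _ => hper w), Finset.sum_add_distrib,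
    ← Finset.mul_sum, ← Finset.mul_sum]
  have hS0 : (∑ w : DEdge m,
      ((if dsrc m w = x then G (oldV x) else 0) + (if dtgt m w = x then G (oldV x) else 0)))
      = (ddeg m x : ℂ) * G (oldV x) := by
    rw [Finset.sum_add_distrib, ← Finset.sum_filter, ← Finset.sum_filter,
      Finset.sum_const, Finset.sum_const, ← add_nsmul]
    rw [show (Finset.univ.filter fun e : DEdge m => dsrc m e = x).card
        + (Finset.univ.filter fun e : DEdge m => dtgt m e = x).card = ddeg m x from rfl,
      nsmul_eq_mul]
  have hS1 : (∑ w : DEdge m,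
      ((if dsrc m w = x then
          G (oldV x) - Complex.exp (Complex.I * (a' w : ℂ)) * G (oldV (dtgt m w)) else 0)
        + (if dtgt m w = x then
          G (oldV x) - Complex.exp (-(Complex.I * (a' w : ℂ))) * G (oldV (dsrc m w)) else 0)))
      = (ddeg m x : ℂ) * magOp m a' (fun v => G (oldV v)) x := by
    rw [magOp, ← mul_assoc, mul_inv_cancel₀ (ddeg_ne m x), one_mul, Finset.sum_add_distrib]
  rw [hS0, hS1]
  have hstep : (2 * (ddeg m x : ℂ))⁻¹ *
      ((2 - 2*(2*(1-z))⁻¹ - 2*((Real.cos (2*β) : ℝ) : ℂ)*(2*(1-z))⁻¹)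
          * ((ddeg m x : ℂ) * G (oldV x))
        + 2*((Real.cos (2*β) : ℝ) : ℂ)*(2*(1-z))⁻¹
          * ((ddeg m x : ℂ) * magOp m a' (fun v => G (oldV v)) x))
      = (2:ℂ)⁻¹ * ((2 - 2*(2*(1-z))⁻¹ - 2*((Real.cos (2*β) : ℝ) : ℂ)*(2*(1-z))⁻¹)
          * G (oldV x)
        + 2*((Real.cos (2*β) : ℝ) : ℂ)*(2*(1-z))⁻¹ * magOp m a' (fun v => G (oldV v)) x) := by
    have hdne : (ddeg m x : ℂ) ≠ 0 := ddeg_ne m x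
    field_simp
  rw [hstep]
  exact scalarOld ((Real.cos (2*β) : ℝ) : ℂ) z (G (oldV x))
    (magOp m a' (fun v => G (oldV v)) x) hcne hz

end Decim
section Assemble
variable {m : ℕ}

noncomputable def decExt (a : DEdge (m+1) → ℝ) (z : ℂ) (g : DVtx m → ℂ) : DVtx (m+1) → ℂ
  | Sum.inl v => g v
  | Sum.inr p => newval a z g p.1 p.2

lemma ExtZ_apply (f : {x : DVtx m // ∀ b, x ≠ base m b} → ℂ) (v : DVtx m)
    (h : ∀ b, v ≠ base m b) : ExtZ m f v = f ⟨v, h⟩ := dif_pos h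

lemma oldV_nonbase {x : DVtx m} (h : ∀ b, x ≠ base m b) :
    ∀ b, oldV x ≠ base (m+1) b := fun b hb => h b (oldV_inj.mp hb)

lemma newV_nonbase (p : DEdge m × Bool) : ∀ b, newV p ≠ base (m+1) b :=
  fun _ hb => newV_ne_oldV _ _ hb

noncomputable def Phi (m : ℕ) :
    ({x : DVtx (m+1) // ∀ b, x ≠ base (m+1) b} → ℂ) →ₗ[ℂ]
      ({x : DVtx m // ∀ b, x ≠ base m b} → ℂ) where
  toFun F := fun y => F ⟨oldV y.val, oldV_nonbase y.2⟩
  map_add' _ _ := rfl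
  map_smul' _ _ := rfl

noncomputable def Psi (m : ℕ) (a : DEdge (m+1) → ℝ) (z : ℂ) :
    ({x : DVtx m // ∀ b, x ≠ base m b} → ℂ) →ₗ[ℂ]
      ({x : DVtx (m+1) // ∀ b, x ≠ base (m+1) b} → ℂ) where
  toFun g := fun x => decExt a z (ExtZ m g) x.val
  map_add' g1 g2 := by
    have hE : ExtZ m (g1 + g2) = ExtZ m g1 + ExtZ m g2 := by
      funext v; simp only [ExtZ, Pi.add_apply]; split <;> simp
    funext x
    obtain ⟨xv, hx⟩ := x
    show decExt a z (ExtZ m (g1 + g2)) xv = _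
    rw [hE]
    cases xv with
    | inl v => rfl
    | inr p =>
        obtain ⟨w, b⟩ := p
        show newval a z (ExtZ m g1 + ExtZ m g2) w b = _
        cases b <;> simp only [newval, Pi.add_apply] <;>
          (show _ = newval a z (ExtZ m g1) w _ + newval a z (ExtZ m g2) w _) <;>
          simp only [newval] <;> ring
  map_smul' c g := by
    have hE : ExtZ m (c • g) = c • ExtZ m g := by
      funext v; simp only [ExtZ, Pi.smul_apply, smul_eq_mul]; split <;> simp
    funext x
    obtain ⟨xv, hx⟩ := x
    show decExt a z (ExtZ m (c • g)) xv = _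
    rw [hE]
    cases xv with
    | inl v => rfl
    | inr p =>
        obtain ⟨w, b⟩ := p
        show newval a z (c • ExtZ m g) w b = _
        show _ = c * newval a z (ExtZ m g) w b
        cases b <;> simp only [newval, Pi.smul_apply, smul_eq_mul] <;> ring

lemma restr_eq (f : {x : DVtx (m+1) // ∀ b, x ≠ base (m+1) b} → ℂ) :
    ExtZ m (Phi m f) = fun v => ExtZ (m+1) f (oldV v) := by
  funext v
  by_cases h : ∀ b, v ≠ base m b
  · rw [ExtZ_apply _ v h, ExtZ_apply f (oldV v) (oldV_nonbase h)]
    rfl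
  · rw [ExtZ, dif_neg h]
    push_neg at h
    obtain ⟨b, hb⟩ := h
    rw [hb]
    exact (ExtZ_base f b).symm

lemma hnew_of_mem (a : DEdge (m+1) → ℝ) (z : ℂ) (hz : (1:ℂ) - z ≠ 0)
    (f : {x : DVtx (m+1) // ∀ b, x ≠ base (m+1) b} → ℂ)
    (hf : ∀ x : {x : DVtx (m+1) // ∀ b, x ≠ base (m+1) b},
      magOp (m+1) a (ExtZ (m+1) f) x.val = z * f x) :
    ∀ w b, ExtZ (m+1) f (newV (w,b)) = newval a z (fun v => ExtZ (m+1) f (oldV v)) w b := by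
  intro w b
  refine (new_iff a z hz (ExtZ (m+1) f) w b).mp ?_
  have h1 := hf ⟨newV (w,b), newV_nonbase _⟩
  rw [show f ⟨newV (w,b), newV_nonbase _⟩ = ExtZ (m+1) f (newV (w,b)) from
    (ExtZ_apply f (newV (w,b)) (newV_nonbase _)).symm] at h1
  exact h1

lemma forward_mem (a : DEdge (m+1) → ℝ) (a' : DEdge m → ℝ) (β : ℝ) (z : ℂ)
    (hz : (1:ℂ) - z ≠ 0) (hc : Real.cos (2*β) ≠ 0)
    (htr : ∀ w, traceForm a w = a' w)
    (hflux : ∀ w, cellFlux a w = 4*β ∨ cellFlux a w = -(4*β))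
    (f : {x : DVtx (m+1) // ∀ b, x ≠ base (m+1) b} → ℂ)
    (hf : f ∈ LinearMap.ker (Matrix.toLin' (dirMat (m+1) a - z • 1))) :
    Phi m f ∈ LinearMap.ker (Matrix.toLin' (dirMat m a' -
      ((-2*z^2 + 4*z - 1 + ((Real.cos (2*β) : ℝ) : ℂ)) / ((Real.cos (2*β) : ℝ) : ℂ)) • 1)) := by
  rw [mem_ker_iff] at hf ⊢
  have hnew := hnew_of_mem a z hz f hf
  intro y
  rw [restr_eq]
  have h3 : magOp (m+1) a (ExtZ (m+1) f) (oldV y.val) = z * ExtZ (m+1) f (oldV y.val) := by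
    have h1 := hf ⟨oldV y.val, oldV_nonbase y.2⟩
    rw [show f ⟨oldV y.val, oldV_nonbase y.2⟩ = ExtZ (m+1) f (oldV y.val) from
      (ExtZ_apply f (oldV y.val) (oldV_nonbase y.2)).symm] at h1
    exact h1
  have h4 := (old_iff a a' β z hz hc htr hflux (ExtZ (m+1) f) hnew y.val).mp h3
  rw [h4, ExtZ_apply f (oldV y.val) (oldV_nonbase y.2)]
  rfl

lemma backward_mem (a : DEdge (m+1) → ℝ) (a' : DEdge m → ℝ) (β : ℝ) (z : ℂ)
    (hz : (1:ℂ) - z ≠ 0) (hc : Real.cos (2*β) ≠ 0)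
    (htr : ∀ w, traceForm a w = a' w)
    (hflux : ∀ w, cellFlux a w = 4*β ∨ cellFlux a w = -(4*β))
    (g : {x : DVtx m // ∀ b, x ≠ base m b} → ℂ)
    (hg : g ∈ LinearMap.ker (Matrix.toLin' (dirMat m a' -
      ((-2*z^2 + 4*z - 1 + ((Real.cos (2*β) : ℝ) : ℂ)) / ((Real.cos (2*β) : ℝ) : ℂ)) • 1))) :
    Psi m a z g ∈ LinearMap.ker (Matrix.toLin' (dirMat (m+1) a - z • 1)) := by
  rw [mem_ker_iff] at hg ⊢
  have hExt : ExtZ (m+1) (Psi m a z g) = decExt a z (ExtZ m g) := by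
    funext v
    by_cases h : ∀ b, v ≠ base (m+1) b
    · rw [ExtZ_apply _ v h]
      rfl
    · rw [ExtZ, dif_neg h]
      push_neg at h
      obtain ⟨b, hb⟩ := h
      rw [hb]
      exact (ExtZ_base g b).symm
  have hnew' : ∀ w b, (decExt a z (ExtZ m g)) (newV (w,b))
      = newval a z (fun v => decExt a z (ExtZ m g) (oldV v)) w b := fun w b => rfl
  intro x
  rw [hExt]
  obtain ⟨xv, hxnb⟩ := x
  cases xv with
  | inl v =>
      have hv : ∀ b, v ≠ base m b := fun b hb => hxnb b (by rw [hb]; rfl)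
      refine (old_iff a a' β z hz hc htr hflux _ hnew' v).mpr ?_
      have h5 := hg ⟨v, hv⟩
      rw [show (fun v' => decExt a z (ExtZ m g) (oldV v')) = ExtZ m g from rfl,
        show decExt a z (ExtZ m g) (oldV v) = ExtZ m g v from rfl, ExtZ_apply g v hv]
      exact h5
  | inr p =>
      obtain ⟨w, b⟩ := p
      exact (new_iff a z hz _ w b).mpr (hnew' w b)

lemma Phi_Psi (a : DEdge (m+1) → ℝ) (z : ℂ) (g : {x : DVtx m // ∀ b, x ≠ base m b} → ℂ) :
    Phi m (Psi m a z g) = g := by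
  funext y
  show decExt a z (ExtZ m g) (oldV y.val) = g y
  show ExtZ m g y.val = g y
  exact ExtZ_val g y

lemma Psi_Phi (a : DEdge (m+1) → ℝ) (z : ℂ) (hz : (1:ℂ) - z ≠ 0)
    (f : {x : DVtx (m+1) // ∀ b, x ≠ base (m+1) b} → ℂ)
    (hf : ∀ x : {x : DVtx (m+1) // ∀ b, x ≠ base (m+1) b},
      magOp (m+1) a (ExtZ (m+1) f) x.val = z * f x) :
    Psi m a z (Phi m f) = f := by
  have hnew := hnew_of_mem a z hz f hf
  funext x
  obtain ⟨xv, hx⟩ := x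
  show decExt a z (ExtZ m (Phi m f)) xv = f ⟨xv, hx⟩
  rw [restr_eq]
  cases xv with
  | inl v =>
      exact ExtZ_apply f (oldV v) hx
  | inr p =>
      obtain ⟨w, b⟩ := p
      show newval a z (fun v => ExtZ (m+1) f (oldV v)) w b = f ⟨Sum.inr (w, b), hx⟩
      rw [← hnew w b]
      exact ExtZ_apply f (newV (w,b)) hx

end Assemble


/-- Spectral decimation relation between consecutive Dirichlet magnetic operators: for
`m = k+2 ≥ 2` with `cos 2β_m ≠ 0`, any eigenvalue `z ≠ 1` of `D_m` maps under
`R_m(z) = (−2z² + 4z − 1 + cos 2β_m)/cos 2β_m` to an eigenvalue of `D_{m−1}` of the same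
multiplicity. -/
theorem stmt10 (βs : ℕ → ℝ) (a : (m : ℕ) → DEdge m → ℝ) (hcomp : Compatible βs a)
    (k : ℕ) (hβ : Real.cos (2 * βs (k + 2)) ≠ 0) (z : ℂ) (hz : z ≠ 1)
    (hev : Module.End.HasEigenvalue (Matrix.toLin' (dirMat (k + 2) (a (k + 2)))) z) :
    Module.End.HasEigenvalue (Matrix.toLin' (dirMat (k + 1) (a (k + 1))))
      ((-2 * z ^ 2 + 4 * z - 1 + ((Real.cos (2 * βs (k + 2)) : ℝ) : ℂ)) /
        ((Real.cos (2 * βs (k + 2)) : ℝ) : ℂ)) ∧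
    Module.finrank ℂ
        (LinearMap.ker (Matrix.toLin' (dirMat (k + 2) (a (k + 2)) - z • 1))) =
      Module.finrank ℂ
        (LinearMap.ker (Matrix.toLin' (dirMat (k + 1) (a (k + 1)) -
          ((-2 * z ^ 2 + 4 * z - 1 + ((Real.cos (2 * βs (k + 2)) : ℝ) : ℂ)) /
            ((Real.cos (2 * βs (k + 2)) : ℝ) : ℂ)) • 1))) := by
  have hz1 : (1:ℂ) - z ≠ 0 := sub_ne_zero.mpr (Ne.symm hz)
  have htr : ∀ w : DEdge (k+1), traceForm (a (k+2)) w = a (k+1) w :=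
    fun w => (hcomp (k+1) w).2
  have hflux : ∀ w : DEdge (k+1),
      cellFlux (a (k+2)) w = 4 * βs (k+2) ∨ cellFlux (a (k+2)) w = -(4 * βs (k+2)) :=
    fun w => (hcomp (k+1) w).1
  have hΦ : ∀ f ∈ LinearMap.ker (Matrix.toLin' (dirMat (k + 2) (a (k + 2)) - z • 1)),
      Phi (k+1) f ∈ LinearMap.ker (Matrix.toLin' (dirMat (k + 1) (a (k + 1)) -
        ((-2 * z ^ 2 + 4 * z - 1 + ((Real.cos (2 * βs (k + 2)) : ℝ) : ℂ)) /
          ((Real.cos (2 * βs (k + 2)) : ℝ) : ℂ)) • 1)) :=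
    fun f hf => forward_mem (a (k+2)) (a (k+1)) (βs (k+2)) z hz1 hβ htr hflux f hf
  have hΨ : ∀ g ∈ LinearMap.ker (Matrix.toLin' (dirMat (k + 1) (a (k + 1)) -
        ((-2 * z ^ 2 + 4 * z - 1 + ((Real.cos (2 * βs (k + 2)) : ℝ) : ℂ)) /
          ((Real.cos (2 * βs (k + 2)) : ℝ) : ℂ)) • 1)),
      Psi (k+1) (a (k+2)) z g ∈
        LinearMap.ker (Matrix.toLin' (dirMat (k + 2) (a (k + 2)) - z • 1)) :=
    fun g hg => backward_mem (a (k+2)) (a (k+1)) (βs (k+2)) z hz1 hβ htr hflux g hg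
  have e : (LinearMap.ker (Matrix.toLin' (dirMat (k + 2) (a (k + 2)) - z • 1))) ≃ₗ[ℂ]
      (LinearMap.ker (Matrix.toLin' (dirMat (k + 1) (a (k + 1)) -
        ((-2 * z ^ 2 + 4 * z - 1 + ((Real.cos (2 * βs (k + 2)) : ℝ) : ℂ)) /
          ((Real.cos (2 * βs (k + 2)) : ℝ) : ℂ)) • 1))) := by
    refine LinearEquiv.ofLinear ((Phi (k+1)).restrict hΦ) ((Psi (k+1) (a (k+2)) z).restrict hΨ)
      ?_ ?_
    · refine LinearMap.ext fun g => Subtype.ext ?_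
      exact Phi_Psi (a (k+2)) z g.val
    · refine LinearMap.ext fun f => Subtype.ext ?_
      exact Psi_Phi (a (k+2)) z hz1 f.val ((mem_ker_iff (a (k+2)) z f.val).mp f.2)
  constructor
  · obtain ⟨v, hv⟩ := hev.exists_hasEigenvector
    have hvmem : v ∈ LinearMap.ker (Matrix.toLin' (dirMat (k + 2) (a (k + 2)) - z • 1)) := by
      rw [LinearMap.mem_ker, Matrix.toLin'_apply, Matrix.sub_mulVec,
        Matrix.smul_mulVec, Matrix.one_mulVec, sub_eq_zero]
      have h1 := hv.apply_eq_smul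
      rw [Matrix.toLin'_apply] at h1
      exact h1
    have hne : Phi (k+1) v ≠ 0 := by
      intro h0
      refine hv.2 ?_
      have h2 := Psi_Phi (a (k+2)) z hz1 v ((mem_ker_iff (a (k+2)) z v).mp hvmem)
      rw [h0, map_zero] at h2
      exact h2.symm
    refine Module.End.hasEigenvalue_of_hasEigenvector
      (x := Phi (k+1) v) ⟨Module.End.mem_eigenspace_iff.mpr ?_, hne⟩
    have hm := hΦ v hvmem
    rw [LinearMap.mem_ker, Matrix.toLin'_apply, Matrix.sub_mulVec,
      Matrix.smul_mulVec, Matrix.one_mulVec, sub_eq_zero] at hm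
    rw [Matrix.toLin'_apply]
    exact hm
  · exact LinearEquiv.finrank_eq e
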